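/- Let S̄, T̄, K̄ be n-slices of the finite group G. For g ∈ G let S̄ ∩ ᵍT̄ denote the n-slice (S_0 ∩ gT_0g⁻¹, …, S_n ∩ gT_ng⁻¹). Then m(K̄,S̄)·m(K̄,T̄) = Σ_{g ∈ [S_0\G/T_0]} m(K̄, S̄ ∩ ᵍT̄), where the sum is over a set of representatives of the double cosets S_0\G/T_0 (the summand depends only on the double coset S_0gT_0, since m is invariant under conjugation of its second argument). -/

import Mathlib

variable {G : Type*}

/-- The conjugate slice `ᵍS̄ = (gS₀g⁻¹, …, gSₙg⁻¹)`. -/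
def sliceConj [Group G] {n : ℕ} (g : G) (S : Fin (n + 1) → Subgroup G) :
    Fin (n + 1) → Subgroup G :=
  fun i => (S i).map (MulAut.conj g).toMonoidHom

/-- The mark `m(K̄,S̄) = |{gS₀ ∈ G/S₀ : g⁻¹Kᵢg ≤ Sᵢ for all i}|`. -/
noncomputable def mark [Group G] {n : ℕ} (K S : Fin (n + 1) → Subgroup G) : ℕ :=
  Nat.card {x : G ⧸ S 0 //
    ∃ g : G, QuotientGroup.mk g = x ∧ ∀ i, ∀ k ∈ K i, g⁻¹ * k * g ∈ S i}

section Aux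

variable [Group G] {n : ℕ}

lemma mem_sliceConj {g x : G} {S : Fin (n + 1) → Subgroup G}
    {i : Fin (n + 1)} : x ∈ sliceConj g S i ↔ g⁻¹ * x * g ∈ S i := by
  constructor
  · rintro ⟨y, hy, rfl⟩
    simpa [mul_assoc] using hy
  · intro h
    exact ⟨g⁻¹ * x * g, h, by simp [mul_assoc]⟩

/-- The subtype whose cardinality is `mark K S`. -/
abbrev MarkType (K S : Fin (n + 1) → Subgroup G) :=
  {x : G ⧸ S 0 //
    ∃ g : G, QuotientGroup.mk g = x ∧ ∀ i, ∀ k ∈ K i, g⁻¹ * k * g ∈ S i}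

/-- The intersection slice `S̄ ∩ ᵍT̄`. -/
abbrev slq (S T : Fin (n + 1) → Subgroup G) (r : G) : Fin (n + 1) → Subgroup G :=
  fun i => S i ⊓ sliceConj r T i

/-- Projection `G ⧸ (S₀ ∩ rT₀r⁻¹) → G ⧸ S₀`. -/
def toS (S T : Fin (n + 1) → Subgroup G) (r : G) :
    G ⧸ (S 0 ⊓ sliceConj r T 0) → G ⧸ S 0 :=
  Quotient.map' id (fun a b h => by
    rw [QuotientGroup.leftRel_apply] at h ⊢
    exact (Subgroup.mem_inf.mp h).1)

/-- The map `c(S₀ ∩ rT₀r⁻¹) ↦ crT₀`. -/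
def toT (S T : Fin (n + 1) → Subgroup G) (r : G) :
    G ⧸ (S 0 ⊓ sliceConj r T 0) → G ⧸ T 0 :=
  Quotient.map' (· * r) (fun a b h => by
    rw [QuotientGroup.leftRel_apply] at h ⊢
    have h2 := (Subgroup.mem_inf.mp h).2
    rw [mem_sliceConj] at h2
    have : (a * r)⁻¹ * (b * r) = r⁻¹ * (a⁻¹ * b) * r := by group
    rw [this]
    exact h2)

lemma toS_mk (S T : Fin (n + 1) → Subgroup G) (r c : G) :
    toS S T r (QuotientGroup.mk c) = QuotientGroup.mk c := rfl

lemma toT_mk (S T : Fin (n + 1) → Subgroup G) (r c : G) :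
    toT S T r (QuotientGroup.mk c) = QuotientGroup.mk (c * r) := rfl

lemma prf1 (S T K : Fin (n + 1) → Subgroup G) (r : G) (x : G ⧸ (S 0 ⊓ sliceConj r T 0))
    (hx : ∃ g : G, QuotientGroup.mk g = x ∧ ∀ i, ∀ k ∈ K i, g⁻¹ * k * g ∈ slq S T r i) :
    ∃ g : G, QuotientGroup.mk g = toS S T r x ∧ ∀ i, ∀ k ∈ K i, g⁻¹ * k * g ∈ S i := by
  obtain ⟨g, rfl, hg⟩ := hx
  exact ⟨g, rfl, fun i k hk => (Subgroup.mem_inf.mp (hg i k hk)).1⟩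

lemma prf2 (S T K : Fin (n + 1) → Subgroup G) (r : G) (x : G ⧸ (S 0 ⊓ sliceConj r T 0))
    (hx : ∃ g : G, QuotientGroup.mk g = x ∧ ∀ i, ∀ k ∈ K i, g⁻¹ * k * g ∈ slq S T r i) :
    ∃ g : G, QuotientGroup.mk g = toT S T r x ∧ ∀ i, ∀ k ∈ K i, g⁻¹ * k * g ∈ T i := by
  obtain ⟨g, rfl, hg⟩ := hx
  refine ⟨g * r, rfl, fun i k hk => ?_⟩
  have h2 := (Subgroup.mem_inf.mp (hg i k hk)).2
  rw [mem_sliceConj] at h2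
  have : (g * r)⁻¹ * k * (g * r) = r⁻¹ * (g⁻¹ * k * g) * r := by group
  rw [this]
  exact h2

/-- The Mackey-type map. -/
def Phi (S T K : Fin (n + 1) → Subgroup G) (R : Finset G) :
    (Σ r : R, MarkType K (slq S T (r : G))) → MarkType K S × MarkType K T :=
  fun p => (⟨toS S T p.1 p.2.1, prf1 S T K p.1 p.2.1 p.2.2⟩,
            ⟨toT S T p.1 p.2.1, prf2 S T K p.1 p.2.1 p.2.2⟩)

end Aux

/-- `m(K̄,S̄)·m(K̄,T̄) = Σ_{g ∈ [S₀\G/T₀]} m(K̄, S̄ ∩ ᵍT̄)`, the sum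
being over a set of representatives of the double cosets `S₀\G/T₀`. -/
theorem mark_mul_mark {n : ℕ} [Group G] [Finite G]
    (S T K : Fin (n + 1) → Subgroup G)
    (hS : Monotone S) (hT : Monotone T) (hK : Monotone K)
    (R : Finset G)
    (hR : ∀ g : G, ∃! r : G, r ∈ R ∧ r ∈ DoubleCoset.doubleCoset g (S 0 : Set G) (T 0 : Set G)) :
    mark K S * mark K T =
      ∑ g ∈ R, mark K (fun i : Fin (n + 1) => S i ⊓ sliceConj g T i) := by
  classical
  have hbij : Function.Bijective (Phi S T K R) := by
    constructor
    · rintro ⟨r, x, hx⟩ ⟨r', x', hx'⟩ h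
      obtain ⟨c, rfl⟩ := QuotientGroup.mk_surjective x
      obtain ⟨c', rfl⟩ := QuotientGroup.mk_surjective x'
      have h1 : (QuotientGroup.mk c : G ⧸ S 0) = QuotientGroup.mk c' :=
        congrArg (fun p => (p.1 : MarkType K S).1) h
      have h2 : (QuotientGroup.mk (c * (r : G)) : G ⧸ T 0) =
          QuotientGroup.mk (c' * (r' : G)) :=
        congrArg (fun p => (p.2 : MarkType K T).1) h
      rw [QuotientGroup.eq] at h1 h2
      -- r' is in the double coset of r
      have hrr' : (r' : G) ∈ DoubleCoset.doubleCoset (r : G) (S 0 : Set G) (T 0 : Set G) := by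
        rw [DoubleCoset.mem_doubleCoset]
        refine ⟨(c⁻¹ * c')⁻¹, inv_mem h1, (c * r)⁻¹ * (c' * r'), h2, by group⟩
      have hrr : (r : G) ∈ DoubleCoset.doubleCoset (r : G) (S 0 : Set G) (T 0 : Set G) := by
        rw [DoubleCoset.mem_doubleCoset]
        exact ⟨1, one_mem _, 1, one_mem _, by group⟩
      obtain ⟨r0, _, hru⟩ := hR (r : G)
      have e1 : (r : G) = r0 := hru _ ⟨r.2, hrr⟩
      have e2 : (r' : G) = r0 := hru _ ⟨r'.2, hrr'⟩
      obtain rfl : r = r' := Subtype.ext (e1.trans e2.symm)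
      have hxx : (QuotientGroup.mk c : G ⧸ (S 0 ⊓ sliceConj (r : G) T 0)) =
          QuotientGroup.mk c' := by
        rw [QuotientGroup.eq]
        refine Subgroup.mem_inf.mpr ⟨h1, mem_sliceConj.mpr ?_⟩
        have : (r : G)⁻¹ * (c⁻¹ * c') * r = (c * r)⁻¹ * (c' * r) := by group
        rw [this]
        exact h2
      exact congrArg (fun y => (⟨r, y⟩ : Σ r : R, MarkType K (slq S T (r : G))))
        (Subtype.ext hxx)
    · rintro ⟨⟨x, hx⟩, ⟨y, hy⟩⟩
      obtain ⟨a, rfl, ha⟩ := hx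
      obtain ⟨b, rfl, hb⟩ := hy
      obtain ⟨r, ⟨hrR, hrd⟩, -⟩ := hR (a⁻¹ * b)
      rw [DoubleCoset.mem_doubleCoset] at hrd
      obtain ⟨s, hs, t, ht, hr⟩ := hrd
      set c : G := a * s⁻¹ with hc
      have hcmem : ∀ i, ∀ k ∈ K i, c⁻¹ * k * c ∈ slq S T r i := by
        intro i k hk
        refine Subgroup.mem_inf.mpr ⟨?_, mem_sliceConj.mpr ?_⟩
        · have : c⁻¹ * k * c = s * (a⁻¹ * k * a) * s⁻¹ := by rw [hc]; group
          rw [this]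
          exact mul_mem (mul_mem (hS (Fin.zero_le i) hs) (ha i k hk))
            (inv_mem (hS (Fin.zero_le i) hs))
        · have : r⁻¹ * (c⁻¹ * k * c) * r = t⁻¹ * (b⁻¹ * k * b) * t := by
            rw [hc, hr]; group
          rw [this]
          exact mul_mem (mul_mem (inv_mem (hT (Fin.zero_le i) ht)) (hb i k hk))
            (hT (Fin.zero_le i) ht)
      refine ⟨⟨⟨r, hrR⟩, ⟨QuotientGroup.mk c, c, rfl, hcmem⟩⟩, ?_⟩
      unfold Phi
      refine Prod.ext (Subtype.ext ?_) (Subtype.ext ?_)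
      · show toS S T r (QuotientGroup.mk c) = QuotientGroup.mk a
        rw [toS_mk, QuotientGroup.eq]
        simpa [hc] using hs
      · show toT S T r (QuotientGroup.mk c) = QuotientGroup.mk b
        rw [toT_mk, QuotientGroup.eq]
        have : (c * r)⁻¹ * b = t⁻¹ := by rw [hc, hr]; group
        rw [this]
        exact inv_mem ht
  have hcard : Nat.card (Σ r : R, MarkType K (slq S T (r : G))) =
      Nat.card (MarkType K S × MarkType K T) :=
    Nat.card_eq_of_bijective _ hbij
  have hprod : Nat.card (MarkType K S × MarkType K T) = mark K S * mark K T := by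
    rw [Nat.card_prod]; rfl
  letI : Fintype ↥R := FinsetCoe.fintype R
  letI : ∀ r : R, Fintype (MarkType K (slq S T (r : G))) := fun r => Fintype.ofFinite _
  letI : Fintype (Σ r : R, MarkType K (slq S T (r : G))) := Sigma.instFintype
  have hsig : Nat.card (Σ r : R, MarkType K (slq S T (r : G))) =
      ∑ r : R, Nat.card (MarkType K (slq S T (r : G))) := by
    rw [Nat.card_eq_fintype_card, Fintype.card_sigma]
    exact Finset.sum_congr rfl fun r _ => (Nat.card_eq_fintype_card).symm
  have hsum : ∑ r : R, Nat.card (MarkType K (slq S T (r : G))) =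
      ∑ g ∈ R, mark K (fun i : Fin (n + 1) => S i ⊓ sliceConj g T i) := by
    rw [← Finset.sum_coe_sort R (fun g => mark K (fun i => S i ⊓ sliceConj g T i))]
    rfl
  rw [← hprod, ← hcard, hsig, hsum]
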